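/- A regular k-uniform intersecting family F on [n] satisfies n ≤ k² - k + 1. -/

import Mathlib

open Finset

lemma offDiag_sum_add {α : Type*} [DecidableEq α] (s : Finset α) (f : α × α → ℕ) :
    ∑ p ∈ s.offDiag, f p + ∑ a ∈ s, f (a, a) = ∑ a ∈ s, ∑ b ∈ s, f (a, b) := by
  have hdiag : ∑ p ∈ s.diag, f p = ∑ a ∈ s, f (a, a) := by
    apply Finset.sum_nbij' (fun p => p.1) (fun a => (a, a))
    · intro p hp; exact (Finset.mem_diag.1 hp).1
    · intro a ha; exact Finset.mem_diag.2 ⟨ha, rfl⟩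
    · rintro ⟨a, b⟩ hp
      have h2 := (Finset.mem_diag.1 hp).2
      simp only at h2 ⊢
      rw [h2]
    · intro a ha; rfl
    · rintro ⟨a, b⟩ hp
      have h2 := (Finset.mem_diag.1 hp).2
      simp only at h2 ⊢
      rw [h2]
  rw [← hdiag, add_comm, ← Finset.sum_union (Finset.disjoint_diag_offDiag s),
    Finset.diag_union_offDiag, Finset.sum_product]

lemma fin1 (N K D : ℤ) (hM4 : D*K^2*(K-1) ≤ (N-1)*(K^2*D + K - N*D))
    (hN : K^2 - K + 2 ≤ N) (hD : K + 1 ≤ D) (hK : 2 ≤ K) : False := by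
  have ht : (0:ℤ) ≤ N - (K^2 - K + 2) := by linarith
  have he2 : (0:ℤ) ≤ D - (K+1) := by linarith
  have hs : (0:ℤ) ≤ K - 2 := by linarith
  nlinarith [hM4, ht, he2, hs,
    mul_nonneg hs hs, mul_nonneg (mul_nonneg hs hs) hs,
    mul_nonneg he2 hs, mul_nonneg (mul_nonneg he2 hs) hs,
    mul_nonneg ht hs, mul_nonneg (mul_nonneg ht hs) hs,
    mul_nonneg (mul_nonneg (mul_nonneg ht hs) hs) hs,
    mul_nonneg ht he2, mul_nonneg (mul_nonneg ht he2) hs,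
    mul_nonneg (mul_nonneg (mul_nonneg ht he2) hs) hs,
    mul_nonneg ht ht, mul_nonneg (mul_nonneg ht ht) hs,
    mul_nonneg (mul_nonneg ht ht) he2]

lemma fin2 (K D : ℤ) (key : K^2 - K ≤ (K - 2) * D) (hdz : 1 ≤ D) (hK : 2 ≤ K)
    (hdkz : D ≤ K) : False := by
  nlinarith [key, hdz, hK,
    mul_nonneg (sub_nonneg.mpr hdkz) (by linarith : (0:ℤ) ≤ K - 1)]

lemma endgame (N K D M A B U V S : ℤ)
    (hnz : 0 < N) (hdz : 1 ≤ D) (hmz : 1 ≤ M) (hkz : 1 ≤ K)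
    (h5z : N*D = K*M)
    (hR1z : A + M*K = M*(K*D))
    (hR2z : B + M*K^2 = S)
    (hR3z : U + N*D = M*K^2)
    (hR4z : V + N*D^2 = S)
    (haz : M*M - M ≤ A)
    (hCS : U^2 ≤ (N*N - N)*V)
    (hVAR : B + (K-1)*(M*M - M) ≤ K*A)
    (hNz : K^2 - K + 2 ≤ N) : False := by
  have hMle : M ≤ K*D - K + 1 := by
    have h1 : M * (M - 1) ≤ M * (K*D - K) := by nlinarith [haz, hR1z]
    have h2 : M - 1 ≤ K*D - K := le_of_mul_le_mul_left h1 (by linarith)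
    linarith
  rcases lt_or_ge K 2 with hk2 | hk2
  · -- K = 1
    have hk1' : K = 1 := by omega
    subst hk1'
    nlinarith [h5z, hMle, hNz, hdz,
      mul_nonneg (by linarith : (0:ℤ) ≤ N - 2) (by linarith : (0:ℤ) ≤ D - 1)]
  · rcases lt_or_ge K D with hkd | hdk
    · -- master case
      have hdk2 : K + 1 ≤ D := hkd
      have hsq : K^2 * M^2 = N^2 * D^2 := by
        linear_combination (-(N*D + K*M)) * h5z
      have eU : U = N*D*(K-1) := by linear_combination hR3z - K*h5z
      have hV : V = B + M*K^2 - N*D^2 := by linarith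
      have h3 : V ≤ K*A - (K-1)*(M*M - M) + M*K^2 - N*D^2 := by linarith
      have h4 := mul_le_mul_of_nonneg_left h3 (by positivity : (0:ℤ) ≤ K^2)
      have hEq : K^2 * (K*A - (K-1)*(M*M - M) + M*K^2 - N*D^2)
          = K^3*N*D^2 - (K-1)*N^2*D^2 + K*(K-1)*N*D - K^2*N*D^2 := by
        linear_combination K^3*hR1z - (K-1)*hsq - (K^3*D + K*(K-1))*h5z
      have hVb : K^2 * V ≤ K^3*N*D^2 - (K-1)*N^2*D^2 + K*(K-1)*N*D - K^2*N*D^2 := by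
        calc K^2 * V ≤ K^2 * (K*A - (K-1)*(M*M - M) + M*K^2 - N*D^2) := h4
          _ = _ := hEq
      have hnn0 : (0:ℤ) ≤ N*N - N := by nlinarith
      have hM2 : N^2*D^2*K^2*(K-1)^2
          ≤ (N*N - N) * (K^3*N*D^2 - (K-1)*N^2*D^2 + K*(K-1)*N*D - K^2*N*D^2) := by
        calc N^2*D^2*K^2*(K-1)^2 = K^2 * U^2 := by rw [eU]; ring
          _ ≤ K^2 * ((N*N - N) * V) := mul_le_mul_of_nonneg_left hCS (by positivity)
          _ = (N*N - N) * (K^2 * V) := by ring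
          _ ≤ _ := mul_le_mul_of_nonneg_left hVb hnn0
      have hpos1 : (0:ℤ) < N^2 * D := by positivity
      have hM3 : D*K^2*(K-1)^2
          ≤ (N-1)*(K^3*D - (K-1)*N*D + K*(K-1) - K^2*D) := by
        refine le_of_mul_le_mul_left ?_ hpos1
        calc N^2*D*(D*K^2*(K-1)^2) = N^2*D^2*K^2*(K-1)^2 := by ring
          _ ≤ (N*N - N) * (K^3*N*D^2 - (K-1)*N^2*D^2 + K*(K-1)*N*D - K^2*N*D^2) := hM2
          _ = N^2*D*((N-1)*(K^3*D - (K-1)*N*D + K*(K-1) - K^2*D)) := by ring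
      have hM4 : D*K^2*(K-1) ≤ (N-1)*(K^2*D + K - N*D) := by
        have hpos2 : (0:ℤ) < K - 1 := by linarith
        refine le_of_mul_le_mul_left ?_ hpos2
        calc (K-1)*(D*K^2*(K-1)) = D*K^2*(K-1)^2 := by ring
          _ ≤ (N-1)*(K^3*D - (K-1)*N*D + K*(K-1) - K^2*D) := hM3
          _ = (K-1)*((N-1)*(K^2*D + K - N*D)) := by ring
      exact fin1 N K D hM4 hNz hdk2 hk2
    · -- LP case
      have key : K^2 - K ≤ (K - 2) * D := by
        have h1 : (K^2 - K + 2) * D ≤ N * D :=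
          mul_le_mul_of_nonneg_right hNz (by linarith)
        have h2 : K * M ≤ K * (K*D - K + 1) :=
          mul_le_mul_of_nonneg_left hMle (by linarith)
        nlinarith [h1, h2, h5z]
      exact fin2 K D key hdz hk2 hdk

set_option maxHeartbeats 2000000 in
theorem bound_on_n (n k : ℕ) (F : Finset (Finset (Fin n)))
    (hF : F.Nonempty)
    (hcard : ∀ A ∈ F, A.card = k)
    (hint : ∀ A ∈ F, ∀ B ∈ F, (A ∩ B).Nonempty)
    (hreg : ∀ x y : Fin n,
      (F.filter (fun A => x ∈ A)).card = (F.filter (fun A => y ∈ A)).card) :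
    n ≤ k ^ 2 - k + 1 := by
  classical
  obtain ⟨A₀, hA₀⟩ := hF
  have hk1 : 1 ≤ k := by
    have h := hint A₀ hA₀ A₀ hA₀
    rw [Finset.inter_self] at h
    have := Finset.card_pos.2 h
    rwa [hcard A₀ hA₀] at this
  rcases Nat.eq_zero_or_pos n with hn | hn
  · omega
  set m := F.card with hm_def
  set x₀ : Fin n := ⟨0, hn⟩ with hx₀
  set d := (F.filter (fun A => x₀ ∈ A)).card with hd_def
  have hdeg : ∀ x : Fin n, (F.filter (fun A => x ∈ A)).card = d := fun x => hreg x x₀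
  set e : Finset (Fin n) → Fin n → ℕ := fun A x => if x ∈ A then 1 else 0 with he_def
  -- basic facts about e
  have he_sum : ∀ A : Finset (Fin n), ∑ x, e A x = A.card := by
    intro A
    simp [he_def, Finset.sum_ite_mem]
  have he_deg : ∀ x : Fin n, ∑ A ∈ F, e A x = d := by
    intro x
    rw [← hdeg x, Finset.card_filter]
  have he_inter : ∀ A B : Finset (Fin n), (A ∩ B).card = ∑ x, e A x * e B x := by
    intro A B
    rw [← he_sum (A ∩ B)]
    refine Finset.sum_congr rfl fun x _ => ?_
    by_cases hx : x ∈ A <;> by_cases hy : x ∈ B <;>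
      simp [he_def, hx, hy]
  set lam : Fin n → Fin n → ℕ := fun x y => ∑ A ∈ F, e A x * e A y with hlam_def
  -- Identity 1 : n * d = m * k
  have hnd : n * d = m * k := by
    have h1 : ∑ x : Fin n, ∑ A ∈ F, e A x = n * d := by
      rw [Finset.sum_congr rfl fun x _ => he_deg x]
      simp [mul_comm]
    have h2 : ∑ x : Fin n, ∑ A ∈ F, e A x = m * k := by
      rw [Finset.sum_comm]
      rw [Finset.sum_congr rfl fun A hA => (he_sum A).trans (hcard A hA)]
      simp [mul_comm, hm_def]
    omega
  -- Identity 2 : row sums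
  have hrow : ∀ A ∈ F, ∑ B ∈ F, (A ∩ B).card = k * d := by
    intro A hA
    calc ∑ B ∈ F, (A ∩ B).card = ∑ B ∈ F, ∑ x, e A x * e B x :=
          Finset.sum_congr rfl fun B _ => he_inter A B
      _ = ∑ x, ∑ B ∈ F, e A x * e B x := Finset.sum_comm
      _ = ∑ x, e A x * d := by
          refine Finset.sum_congr rfl fun x _ => ?_
          rw [← Finset.mul_sum, he_deg x]
      _ = (∑ x, e A x) * d := by rw [Finset.sum_mul]
      _ = k * d := by rw [he_sum A, hcard A hA]
  have hS1 : ∑ A ∈ F, ∑ B ∈ F, (A ∩ B).card = m * (k * d) := by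
    rw [Finset.sum_congr rfl hrow]
    simp [mul_comm, hm_def]
  -- Identity 3 : the 4-fold swap
  have hS2 : ∑ A ∈ F, ∑ B ∈ F, ((A ∩ B).card) ^ 2 = ∑ x, ∑ y, (lam x y) ^ 2 := by
    have step : ∀ A B : Finset (Fin n), ((A ∩ B).card) ^ 2 =
        ∑ x, ∑ y, (e A x * e A y) * (e B x * e B y) := by
      intro A B
      rw [he_inter A B, sq, Finset.sum_mul_sum]
      refine Finset.sum_congr rfl fun x _ => Finset.sum_congr rfl fun y _ => ?_
      ring
    calc ∑ A ∈ F, ∑ B ∈ F, ((A ∩ B).card) ^ 2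
        = ∑ A ∈ F, ∑ B ∈ F, ∑ x, ∑ y, (e A x * e A y) * (e B x * e B y) := by
          exact Finset.sum_congr rfl fun A _ => Finset.sum_congr rfl fun B _ => step A B
      _ = ∑ A ∈ F, ∑ x, ∑ B ∈ F, ∑ y, (e A x * e A y) * (e B x * e B y) := by
          exact Finset.sum_congr rfl fun A _ => Finset.sum_comm
      _ = ∑ x, ∑ A ∈ F, ∑ B ∈ F, ∑ y, (e A x * e A y) * (e B x * e B y) :=
          Finset.sum_comm
      _ = ∑ x, ∑ A ∈ F, ∑ y, ∑ B ∈ F, (e A x * e A y) * (e B x * e B y) := by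
          exact Finset.sum_congr rfl fun x _ => Finset.sum_congr rfl fun A _ =>
            Finset.sum_comm
      _ = ∑ x, ∑ y, ∑ A ∈ F, ∑ B ∈ F, (e A x * e A y) * (e B x * e B y) := by
          exact Finset.sum_congr rfl fun x _ => Finset.sum_comm
      _ = ∑ x, ∑ y, (lam x y) ^ 2 := by
          refine Finset.sum_congr rfl fun x _ => Finset.sum_congr rfl fun y _ => ?_
          rw [hlam_def, sq, Finset.sum_mul_sum]
  -- Identity 4
  have hT : ∑ x, ∑ y, lam x y = m * k ^ 2 := by
    calc ∑ x, ∑ y, lam x y = ∑ x, ∑ A ∈ F, ∑ y, e A x * e A y := by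
          exact Finset.sum_congr rfl fun x _ => Finset.sum_comm
      _ = ∑ A ∈ F, ∑ x, ∑ y, e A x * e A y := Finset.sum_comm
      _ = ∑ A ∈ F, (∑ x, e A x) * (∑ y, e A y) := by
          exact Finset.sum_congr rfl fun A _ => (Finset.sum_mul_sum _ _ _ _).symm
      _ = ∑ A ∈ F, k * k := by
          refine Finset.sum_congr rfl fun A hA => ?_
          rw [he_sum A, hcard A hA]
      _ = m * k ^ 2 := by simp [sq, mul_comm, hm_def]
  -- diagonal of lam
  have hlam_diag : ∀ x : Fin n, lam x x = d := by
    intro x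
    rw [hlam_def, ← he_deg x]
    refine Finset.sum_congr rfl fun A _ => ?_
    by_cases hx : x ∈ A <;> simp [he_def, hx]
  -- off-diagonal quantities
  set a := ∑ p ∈ F.offDiag, (p.1 ∩ p.2).card with ha_def
  set b := ∑ p ∈ F.offDiag, ((p.1 ∩ p.2).card) ^ 2 with hb_def
  set u := ∑ p ∈ (univ : Finset (Fin n)).offDiag, lam p.1 p.2 with hu_def
  set v := ∑ p ∈ (univ : Finset (Fin n)).offDiag, (lam p.1 p.2) ^ 2 with hv_def
  set S := ∑ x, ∑ y, (lam x y) ^ 2 with hS_def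
  have hdg1 : ∑ A ∈ F, (A ∩ A).card = m * k := by
    calc ∑ A ∈ F, (A ∩ A).card = ∑ A ∈ F, k :=
          Finset.sum_congr rfl fun A hA => by rw [Finset.inter_self]; exact hcard A hA
      _ = m * k := by rw [Finset.sum_const, smul_eq_mul]
  have hdg2 : ∑ A ∈ F, ((A ∩ A).card) ^ 2 = m * k ^ 2 := by
    calc ∑ A ∈ F, ((A ∩ A).card) ^ 2 = ∑ A ∈ F, k ^ 2 :=
          Finset.sum_congr rfl fun A hA => by rw [Finset.inter_self, hcard A hA]
      _ = m * k ^ 2 := by rw [Finset.sum_const, smul_eq_mul]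
  have hdg3 : ∑ x : Fin n, lam x x = n * d := by
    calc ∑ x : Fin n, lam x x = ∑ _x : Fin n, d :=
          Finset.sum_congr rfl fun x _ => hlam_diag x
      _ = n * d := by rw [Finset.sum_const, smul_eq_mul, Finset.card_univ, Fintype.card_fin]
  have hdg4 : ∑ x : Fin n, (lam x x) ^ 2 = n * d ^ 2 := by
    calc ∑ x : Fin n, (lam x x) ^ 2 = ∑ _x : Fin n, d ^ 2 :=
          Finset.sum_congr rfl fun x _ => by rw [hlam_diag x]
      _ = n * d ^ 2 := by rw [Finset.sum_const, smul_eq_mul, Finset.card_univ, Fintype.card_fin]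
  have hR1 : a + m * k = m * (k * d) := by
    have h := offDiag_sum_add F (fun p => (p.1 ∩ p.2).card)
    simp only at h
    rw [hdg1, hS1] at h
    exact h
  have hR2 : b + m * k ^ 2 = S := by
    have h := offDiag_sum_add F (fun p => ((p.1 ∩ p.2).card) ^ 2)
    simp only at h
    rw [hdg2, hS2] at h
    exact h
  have hR3 : u + n * d = m * k ^ 2 := by
    have h := offDiag_sum_add (univ : Finset (Fin n)) (fun p => lam p.1 p.2)
    simp only at h
    rw [hdg3, hT] at h
    exact h
  have hR4 : v + n * d ^ 2 = S := by
    have h := offDiag_sum_add (univ : Finset (Fin n)) (fun p => (lam p.1 p.2) ^ 2)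
    simp only at h
    rw [hdg4] at h
    exact h
  -- cardinalities and basic positivity
  have hm1 : 1 ≤ m := Finset.card_pos.2 ⟨A₀, hA₀⟩
  have hd1 : 1 ≤ d := by
    rcases Nat.eq_zero_or_pos d with h0 | h; swap
    · exact h
    · exfalso
      rw [h0, mul_zero] at hnd
      have : 0 < m * k := Nat.mul_pos hm1 hk1
      omega
  have hFoff : F.offDiag.card = m * m - m := Finset.offDiag_card F
  have hUoff : (univ : Finset (Fin n)).offDiag.card = n * n - n := by
    rw [Finset.offDiag_card, Finset.card_univ, Fintype.card_fin]
  -- bounds on pairwise intersections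
  have hpair : ∀ p ∈ F.offDiag, 1 ≤ (p.1 ∩ p.2).card ∧ (p.1 ∩ p.2).card + 1 ≤ k := by
    rintro ⟨A, B⟩ hp
    obtain ⟨hA, hB, hne⟩ := Finset.mem_offDiag.1 hp
    dsimp only
    refine ⟨Finset.card_pos.2 (hint A hA B hB), ?_⟩
    have hsub : A ∩ B ⊆ A := Finset.inter_subset_left
    have hne2 : A ∩ B ≠ A := by
      intro hEq
      have hAB : A ⊆ B := Finset.inter_eq_left.1 hEq
      have : A = B := Finset.eq_of_subset_of_card_le hAB
        (by rw [hcard A hA, hcard B hB])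
      exact hne this
    have hlt : (A ∩ B).card < A.card :=
      Finset.card_lt_card (hsub.ssubset_of_ne hne2)
    rw [hcard A hA] at hlt
    omega
  -- lower bound on a
  have haLB : m * m - m ≤ a := by
    have h := Finset.card_nsmul_le_sum F.offDiag (fun p => (p.1 ∩ p.2).card) 1
      (fun p hp => (hpair p hp).1)
    rw [smul_eq_mul, mul_one, hFoff] at h
    exact h
  -- integer versions
  have hnz : (0:ℤ) < (n:ℤ) := by exact_mod_cast hn
  have hdz : (1:ℤ) ≤ (d:ℤ) := by exact_mod_cast hd1
  have hmz : (1:ℤ) ≤ (m:ℤ) := by exact_mod_cast hm1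
  have hkz : (1:ℤ) ≤ (k:ℤ) := by exact_mod_cast hk1
  have h5z : (n:ℤ) * d = m * k := by exact_mod_cast hnd
  have hR1z : (a:ℤ) + m * k = m * (k * d) := by exact_mod_cast hR1
  have hR2z : (b:ℤ) + m * k ^ 2 = S := by exact_mod_cast hR2
  have hR3z : (u:ℤ) + n * d = m * k ^ 2 := by exact_mod_cast hR3
  have hR4z : (v:ℤ) + n * d ^ 2 = S := by exact_mod_cast hR4
  have hmm : ((m * m - m : ℕ) : ℤ) = (m:ℤ) * m - m := by
    have : m ≤ m * m := Nat.le_mul_of_pos_left m hm1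
    push_cast [Nat.cast_sub this]
    ring
  have hnn : ((n * n - n : ℕ) : ℤ) = (n:ℤ) * n - n := by
    have : n ≤ n * n := Nat.le_mul_of_pos_left n hn
    push_cast [Nat.cast_sub this]
    ring
  have haz : (m:ℤ) * m - m ≤ (a:ℤ) := by
    rw [← hmm]
    exact_mod_cast haLB
  -- Cauchy-Schwarz
  have hCS : ((u:ℤ)) ^ 2 ≤ ((n:ℤ) * n - n) * (v:ℤ) := by
    have h := sq_sum_le_card_mul_sum_sq
      (s := (univ : Finset (Fin n)).offDiag) (f := fun p => ((lam p.1 p.2 : ℕ) : ℤ))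
    have e1 : ((u : ℕ) : ℤ) = ∑ p ∈ (univ : Finset (Fin n)).offDiag, ((lam p.1 p.2 : ℕ) : ℤ) := by
      rw [hu_def]; push_cast; rfl
    have e2 : ((v : ℕ) : ℤ) = ∑ p ∈ (univ : Finset (Fin n)).offDiag, ((lam p.1 p.2 : ℕ) : ℤ) ^ 2 := by
      rw [hv_def]; push_cast; rfl
    rw [← e1, ← e2, hUoff, hnn] at h
    exact h
  -- Variance inequality
  have hVAR : (b:ℤ) + ((k:ℤ) - 1) * ((m:ℤ) * m - m) ≤ (k:ℤ) * (a:ℤ) := by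
    have h0 : (0:ℤ) ≤ ∑ p ∈ F.offDiag,
        (((p.1 ∩ p.2).card : ℤ) - 1) * ((k:ℤ) - 1 - ((p.1 ∩ p.2).card : ℤ)) := by
      refine Finset.sum_nonneg fun p hp => ?_
      obtain ⟨h1, h2⟩ := hpair p hp
      have c1 : (1:ℤ) ≤ ((p.1 ∩ p.2).card : ℤ) := by exact_mod_cast h1
      have c2 : ((p.1 ∩ p.2).card : ℤ) + 1 ≤ (k:ℤ) := by exact_mod_cast h2
      have t1 : (0:ℤ) ≤ ((p.1 ∩ p.2).card : ℤ) - 1 := sub_nonneg.mpr c1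
      have t2 : (0:ℤ) ≤ (k:ℤ) - 1 - ((p.1 ∩ p.2).card : ℤ) := by
        have h3 := sub_nonneg.mpr c2
        calc (0:ℤ) ≤ (k:ℤ) - (((p.1 ∩ p.2).card : ℤ) + 1) := h3
          _ = (k:ℤ) - 1 - ((p.1 ∩ p.2).card : ℤ) := by ring
      exact mul_nonneg t1 t2
    have hexp : ∑ p ∈ F.offDiag,
        (((p.1 ∩ p.2).card : ℤ) - 1) * ((k:ℤ) - 1 - ((p.1 ∩ p.2).card : ℤ))
        = (k:ℤ) * (a:ℤ) - (b:ℤ) - ((k:ℤ) - 1) * ((m:ℤ) * m - m) := by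
      have ea : ((a : ℕ) : ℤ) = ∑ p ∈ F.offDiag, (((p.1 ∩ p.2).card : ℕ) : ℤ) := by
        rw [ha_def]; push_cast; rfl
      have eb : ((b : ℕ) : ℤ) = ∑ p ∈ F.offDiag, (((p.1 ∩ p.2).card : ℕ) : ℤ) ^ 2 := by
        rw [hb_def]; push_cast; rfl
      calc ∑ p ∈ F.offDiag, (((p.1 ∩ p.2).card : ℤ) - 1) * ((k:ℤ) - 1 - ((p.1 ∩ p.2).card : ℤ))
          = ∑ p ∈ F.offDiag, ((k:ℤ) * ((p.1 ∩ p.2).card : ℤ)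
              - (((p.1 ∩ p.2).card : ℤ)) ^ 2 - ((k:ℤ) - 1)) :=
            Finset.sum_congr rfl fun p _ => by ring
        _ = (∑ p ∈ F.offDiag, (k:ℤ) * ((p.1 ∩ p.2).card : ℤ))
              - (∑ p ∈ F.offDiag, (((p.1 ∩ p.2).card : ℤ)) ^ 2)
              - (∑ _p ∈ F.offDiag, ((k:ℤ) - 1)) := by
            rw [Finset.sum_sub_distrib, Finset.sum_sub_distrib]
        _ = (k:ℤ) * (a:ℤ) - (b:ℤ) - ((k:ℤ) - 1) * ((m:ℤ) * m - m) := by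
            rw [← Finset.mul_sum, ← ea, ← eb, Finset.sum_const, nsmul_eq_mul, hFoff, hmm]
            ring
    rw [hexp] at h0
    linarith
  -- proof by contradiction
  by_contra hcon
  push_neg at hcon
  have hkk : k ≤ k ^ 2 := by
    have := Nat.mul_le_mul_left k hk1
    rw [mul_one] at this
    calc k ≤ k * k := this
      _ = k ^ 2 := (sq k).symm
  have hNz : (k:ℤ) ^ 2 - k + 2 ≤ (n:ℤ) := by
    have h1 : k ^ 2 - k + 2 ≤ n := by
      revert hcon; generalize k ^ 2 = K2; intro hcon; omega
    have h2 : ((k ^ 2 - k + 2 : ℕ) : ℤ) ≤ (n:ℤ) := by exact_mod_cast h1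
    rwa [Nat.cast_add, Nat.cast_sub hkk] at h2
  exact endgame (n:ℤ) (k:ℤ) (d:ℤ) (m:ℤ) (a:ℤ) (b:ℤ) (u:ℤ) (v:ℤ) (S:ℤ)
    hnz hdz hmz hkz (by linarith [h5z]) hR1z hR2z hR3z hR4z haz hCS hVAR hNz
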